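/- Let X be a measurable space, let D be a probability measure on X × {−1, 1}, let γ ∈ (0, 1], η > 0, and T a positive integer. Let h_1, …, h_T : X → ℝ be measurable functions with |h_t(x)| ≤ 1/γ for all t and x, and define H_1 = 0 and H_{t+1} = H_t + η·h_t for t = 1, …, T. Then −(1/T)·Σ_{t=1}^T E_{(x,y)∼D}[φ′(y·H_t(x))·y·h_t(x)] ≤ 2/(η·T) + η/(2γ²). -/

import Mathlib

open MeasureTheory

/-- The potential function φ(z) = 2 − z for z ≤ 0 and φ(z) = (z + 2)·exp(−z) for z > 0. -/
noncomputable def phi (z : ℝ) : ℝ := if z ≤ 0 then 2 - z else (z + 2) * Real.exp (-z)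

/-- The derivative of the potential function: φ′(z) = −1 for z ≤ 0 and
φ′(z) = −(z + 1)·exp(−z) for z > 0. -/
noncomputable def phi' (z : ℝ) : ℝ := if z ≤ 0 then -1 else -(z + 1) * Real.exp (-z)

noncomputable def psi (z : ℝ) : ℝ := if z ≤ 0 then 0 else z * Real.exp (-z)

lemma phi_nonneg (z : ℝ) : 0 ≤ phi z := by
  unfold phi
  split
  · linarith
  · push_neg at *
    nlinarith [Real.exp_pos (-z)]

lemma phi_zero : phi 0 = 2 := by simp [phi]

lemma phi_le (z : ℝ) : phi z ≤ 2 + |z| := by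
  unfold phi
  split
  · rw [abs_of_nonpos (by linarith)]; linarith
  · push_neg at *
    rw [abs_of_pos (by linarith)]
    have h1 : Real.exp (-z) ≤ 1 := Real.exp_le_one_iff.2 (by linarith)
    nlinarith [Real.exp_pos (-z)]

lemma phi'_mem (z : ℝ) : -1 ≤ phi' z ∧ phi' z ≤ 0 := by
  unfold phi'
  split
  · constructor <;> norm_num
  · push_neg at *
    have h1 : Real.exp (-z) ≤ 1 := Real.exp_le_one_iff.2 (by linarith)
    have h2 : (0:ℝ) < Real.exp (-z) := Real.exp_pos _
    have h3 : z * Real.exp (-z) ≥ 0 := by positivity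
    have h4 : Real.exp (-z) * Real.exp z = 1 := by rw [← Real.exp_add]; simp
    constructor <;> nlinarith [Real.add_one_le_exp z, Real.exp_pos z]

lemma abs_phi'_le (z : ℝ) : |phi' z| ≤ 1 := by
  obtain ⟨a, b⟩ := phi'_mem z
  rw [abs_le]; constructor <;> linarith

lemma hasDerivAt_phi (z : ℝ) : HasDerivAt phi (phi' z) z := by
  have hright : ∀ w : ℝ, HasDerivAt (fun z => (z + 2) * Real.exp (-z)) (-(w + 1) * Real.exp (-w)) w := by
    intro w
    have h1 : HasDerivAt (fun z : ℝ => z + 2) 1 w := (hasDerivAt_id w).add_const 2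
    have h2 : HasDerivAt (fun z : ℝ => Real.exp (-z)) (-Real.exp (-w)) w := by
      exact (hasDerivAt_neg w).exp.congr_deriv (by ring)
    have := h1.mul h2
    exact this.congr_deriv (by ring)
  have hleft : ∀ w : ℝ, HasDerivAt (fun z : ℝ => 2 - z) (-1) w := by
    intro w
    simpa using ((hasDerivAt_id w).const_sub 2)
  rcases lt_trichotomy z 0 with hz | hz | hz
  · have : phi' z = -1 := by simp [phi', hz.le]
    rw [this]
    apply (hleft z).congr_of_eventuallyEq
    filter_upwards [Iio_mem_nhds hz] with w hw
    simp [phi, hw.out.le]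
  · subst hz
    have key : HasDerivAt phi (-1) 0 := by
      have h1 : HasDerivWithinAt phi (-1) (Set.Iic 0) 0 := by
        apply ((hleft 0).hasDerivWithinAt).congr
        · intro w hw; simp [phi, hw.out]
        · simp [phi]
      have h2 : HasDerivWithinAt phi (-1) (Set.Ici 0) 0 := by
        have := ((hright 0).hasDerivWithinAt (s := Set.Ici 0))
        have h2' : HasDerivWithinAt (fun z => (z + 2) * Real.exp (-z)) (-1) (Set.Ici 0) 0 := by
          exact this.congr_deriv (by norm_num)
        apply h2'.congr
        · intro w hw
          rcases eq_or_lt_of_le (hw.out : (0:ℝ) ≤ w) with hw' | hw'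
          · simp [phi, ← hw']
          · simp [phi, not_le.2 hw']
        · simp [phi]
      have := h1.union h2
      rw [Set.Iic_union_Ici] at this
      exact hasDerivWithinAt_univ.1 this
    have : phi' 0 = -1 := by simp [phi']
    rw [this]; exact key
  · have : phi' z = -(z + 1) * Real.exp (-z) := by simp [phi', not_le.2 hz]
    rw [this]
    apply (hright z).congr_of_eventuallyEq
    filter_upwards [Ioi_mem_nhds hz] with w hw
    simp [phi, not_le.2 hw.out]

lemma hasDerivAt_phi' (z : ℝ) : HasDerivAt phi' (psi z) z := by
  have hright : ∀ w : ℝ, HasDerivAt (fun z => -(z + 1) * Real.exp (-z)) (w * Real.exp (-w)) w := by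
    intro w
    have h1 : HasDerivAt (fun z : ℝ => -(z + 1)) (-1) w := by
      exact ((hasDerivAt_id w).add_const 1).neg
    have h2 : HasDerivAt (fun z : ℝ => Real.exp (-z)) (-Real.exp (-w)) w := by
      exact (hasDerivAt_neg w).exp.congr_deriv (by ring)
    have := h1.mul h2
    exact this.congr_deriv (by ring)
  rcases lt_trichotomy z 0 with hz | hz | hz
  · have : psi z = 0 := by simp [psi, hz.le]
    rw [this]
    apply (hasDerivAt_const z (-1:ℝ)).congr_of_eventuallyEq
    filter_upwards [Iio_mem_nhds hz] with w hw
    simp [phi', hw.out.le]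
  · subst hz
    have key : HasDerivAt phi' 0 0 := by
      have h1 : HasDerivWithinAt phi' 0 (Set.Iic 0) 0 := by
        apply ((hasDerivAt_const (0:ℝ) (-1:ℝ)).hasDerivWithinAt).congr
        · intro w hw; simp [phi', hw.out]
        · simp [phi']
      have h2 : HasDerivWithinAt phi' 0 (Set.Ici 0) 0 := by
        have h2' : HasDerivWithinAt (fun z => -(z + 1) * Real.exp (-z)) 0 (Set.Ici 0) 0 := by
          exact ((hright 0).hasDerivWithinAt (s := Set.Ici 0)).congr_deriv (by norm_num)
        apply h2'.congr
        · intro w hw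
          rcases eq_or_lt_of_le (hw.out : (0:ℝ) ≤ w) with hw' | hw'
          · simp [phi', ← hw']
          · simp [phi', not_le.2 hw']
        · simp [phi']
      have := h1.union h2
      rw [Set.Iic_union_Ici] at this
      exact hasDerivWithinAt_univ.1 this
    have : psi 0 = 0 := by simp [psi]
    rw [this]; exact key
  · have : psi z = z * Real.exp (-z) := by simp [psi, not_le.2 hz]
    rw [this]
    apply (hright z).congr_of_eventuallyEq
    filter_upwards [Ioi_mem_nhds hz] with w hw
    simp [phi', not_le.2 hw.out]

lemma abs_psi_le (z : ℝ) : |psi z| ≤ 1 := by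
  unfold psi
  split
  · norm_num
  · push_neg at *
    have h2 : Real.exp (-z) * Real.exp z = 1 := by rw [← Real.exp_add]; simp
    have h3 : 0 ≤ z * Real.exp (-z) := by positivity
    rw [abs_of_nonneg h3]
    nlinarith [Real.add_one_le_exp z, Real.exp_pos z, Real.exp_pos (-z)]

lemma phi'_lipschitz (u v : ℝ) : |phi' u - phi' v| ≤ |u - v| := by
  have hdiff : ∀ x ∈ Set.univ, DifferentiableAt ℝ phi' x :=
    fun x _ => (hasDerivAt_phi' x).differentiableAt
  have hbd : ∀ x ∈ Set.univ, ‖deriv phi' x‖ ≤ (1:ℝ) := by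
    intro x _
    rw [(hasDerivAt_phi' x).deriv]
    simpa using abs_psi_le x
  simpa using Convex.norm_image_sub_le_of_norm_deriv_le hdiff hbd convex_univ
    (Set.mem_univ v) (Set.mem_univ u)

lemma phi_taylor (a b : ℝ) : phi (a + b) ≤ phi a + phi' a * b + b ^ 2 / 2 := by
  set g : ℝ → ℝ := fun t => phi (a + t * b) - t * (phi' a * b) - t ^ 2 * (b ^ 2 / 2) with hg
  have hderiv : ∀ t : ℝ, HasDerivAt g (phi' (a + t * b) * b - phi' a * b - t * b ^ 2) t := by
    intro t
    have h1 : HasDerivAt (fun t : ℝ => a + t * b) b t := by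
      simpa using ((hasDerivAt_id t).mul_const b).const_add a
    have h2 : HasDerivAt (fun t => phi (a + t * b)) (phi' (a + t * b) * b) t :=
      by have := (hasDerivAt_phi (a + t * b)).comp t h1; exact this
    have h3 : HasDerivAt (fun t : ℝ => t * (phi' a * b)) (phi' a * b) t := by
      simpa using (hasDerivAt_id t).mul_const (phi' a * b)
    have h4 : HasDerivAt (fun t : ℝ => t ^ 2 * (b ^ 2 / 2)) (t * b ^ 2) t := by
      have := (hasDerivAt_pow 2 t).mul_const (b ^ 2 / 2)
      exact this.congr_deriv (by ring)
    exact (h2.sub h3).sub h4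
  have hanti : AntitoneOn g (Set.Icc 0 1) := by
    apply antitoneOn_of_deriv_nonpos (convex_Icc 0 1)
    · exact (fun t _ => (hderiv t).differentiableAt.continuousAt.continuousWithinAt)
    · exact fun t _ => (hderiv t).differentiableAt.differentiableWithinAt
    · intro t ht
      rw [interior_Icc] at ht
      rw [(hderiv t).deriv]
      have h5 : phi' (a + t * b) * b - phi' a * b ≤ t * b ^ 2 := by
        have := phi'_lipschitz (a + t * b) a
        have h6 : |a + t * b - a| = |t| * |b| := by rw [← abs_mul]; ring_nf
        have h7 : phi' (a + t * b) * b - phi' a * b ≤ |phi' (a + t * b) - phi' a| * |b| := by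
          calc phi' (a + t * b) * b - phi' a * b = (phi' (a + t * b) - phi' a) * b := by ring
          _ ≤ |(phi' (a + t * b) - phi' a) * b| := le_abs_self _
          _ = |phi' (a + t * b) - phi' a| * |b| := abs_mul _ _
        have h8 : |t| = t := abs_of_pos ht.1
        calc phi' (a + t * b) * b - phi' a * b ≤ |phi' (a + t * b) - phi' a| * |b| := h7
        _ ≤ (|t| * |b|) * |b| := by rw [← h6]; exact mul_le_mul_of_nonneg_right this (abs_nonneg _)
        _ = t * b ^ 2 := by rw [h8, mul_assoc, ← sq_abs]; ring
      linarith
  have := hanti (Set.left_mem_Icc.2 zero_le_one) (Set.right_mem_Icc.2 zero_le_one) zero_le_one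
  simp only [hg] at this
  norm_num at this
  linarith

lemma measurable_phi : Measurable phi :=
  Measurable.ite measurableSet_Iic (by fun_prop) (by fun_prop)

lemma measurable_phi' : Measurable phi' :=
  Measurable.ite measurableSet_Iic (by fun_prop) (by fun_prop)


/-- Telescoping descent bound: with H_1 = 0 and H_{t+1} = H_t + η·h_t for t = 1,…,T,
−(1/T)·Σ_{t=1}^T Φ′_D(H_t, h_t) ≤ 2/(ηT) + η/(2γ²). -/
theorem telescoped_descent {X : Type*} [MeasurableSpace X]
    (D : Measure (X × ℝ)) [IsProbabilityMeasure D]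
    (hlab : ∀ᵐ p ∂D, p.2 = 1 ∨ p.2 = -1)
    (γ η : ℝ) (hγ0 : 0 < γ) (hγ1 : γ ≤ 1) (hη : 0 < η)
    (T : ℕ) (hT : 0 < T)
    (h : ℕ → X → ℝ) (hhmeas : ∀ t, Measurable (h t))
    (hhbd : ∀ t x, |h t x| ≤ 1 / γ)
    (H : ℕ → X → ℝ)
    (hH1 : ∀ x, H 1 x = 0)
    (hrec : ∀ t ∈ Finset.Icc 1 T, ∀ x, H (t + 1) x = H t x + η * h t x) :
    -(1 / (T : ℝ)) *
        ∑ t ∈ Finset.Icc 1 T, ∫ p, phi' (p.2 * H t p.1) * p.2 * h t p.1 ∂D ≤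
      2 / (η * T) + η / (2 * γ ^ 2) := by
  set C : ℝ := (T : ℝ) * (η / γ) with hC
  have hC0 : 0 ≤ C := by positivity
  -- measurability and boundedness of H t for 1 ≤ t ≤ T+1
  have hHfact : ∀ t, 1 ≤ t → t ≤ T + 1 →
      Measurable (H t) ∧ ∀ x, |H t x| ≤ ((t : ℝ) - 1) * (η / γ) := by
    intro t ht1
    induction t, ht1 using Nat.le_induction with
    | base =>
      intro _
      constructor
      · simp only [show H 1 = fun _ => (0:ℝ) from funext hH1]
        exact measurable_const
      · intro x; simp [hH1 x]
    | succ n hn ih =>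
      intro hle
      have hnT : n ∈ Finset.Icc 1 T := Finset.mem_Icc.2 ⟨hn, by omega⟩
      obtain ⟨hm, hb⟩ := ih (by omega)
      have heq : H (n + 1) = fun x => H n x + η * h n x := funext (hrec n hnT)
      constructor
      · rw [heq]; exact hm.add ((hhmeas n).const_mul η)
      · intro x
        rw [heq]
        have h1 := hb x
        have h2 := hhbd n x
        have h3 : |H n x + η * h n x| ≤ |H n x| + η * |h n x| := by
          calc |H n x + η * h n x| ≤ |H n x| + |η * h n x| := abs_add_le _ _
          _ = |H n x| + η * |h n x| := by rw [abs_mul, abs_of_pos hη]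
        have hcast : ((n + 1 : ℕ) : ℝ) - 1 = (n : ℝ) := by push_cast; ring
        rw [hcast]
        show |H n x + η * h n x| ≤ (n : ℝ) * (η / γ)
        have h4 : η * |h n x| ≤ η * (1 / γ) := mul_le_mul_of_nonneg_left h2 hη.le
        have h5 : η * (1 / γ) = η / γ := by ring
        have h6 : ((n:ℝ) - 1) * (η / γ) + η / γ = (n : ℝ) * (η / γ) := by ring
        linarith
  have hHbd : ∀ t, 1 ≤ t → t ≤ T + 1 → ∀ x, |H t x| ≤ C := by
    intro t ht1 ht2 x
    refine (hHfact t ht1 ht2).2 x |>.trans ?_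
    have : ((t:ℝ) - 1) ≤ (T:ℝ) := by
      have : (t:ℝ) ≤ (T:ℝ) + 1 := by exact_mod_cast ht2
      linarith
    have hηγ : 0 ≤ η / γ := by positivity
    exact mul_le_mul_of_nonneg_right this hηγ
  -- integrability
  have intPhi : ∀ t, 1 ≤ t → t ≤ T + 1 →
      Integrable (fun p : X × ℝ => phi (p.2 * H t p.1)) D := by
    intro t ht1 ht2
    have hmeas : Measurable (fun p : X × ℝ => phi (p.2 * H t p.1)) :=
      measurable_phi.comp (measurable_snd.mul ((hHfact t ht1 ht2).1.comp measurable_fst))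
    apply Integrable.mono' (integrable_const (2 + C)) hmeas.aestronglyMeasurable
    filter_upwards [hlab] with p hp
    have hy : |p.2| = 1 := by rcases hp with hp | hp <;> simp [hp]
    rw [Real.norm_eq_abs, abs_of_nonneg (phi_nonneg _)]
    calc phi (p.2 * H t p.1) ≤ 2 + |p.2 * H t p.1| := phi_le _
    _ = 2 + |H t p.1| := by rw [abs_mul, hy, one_mul]
    _ ≤ 2 + C := by linarith [hHbd t ht1 ht2 p.1]
  have intG : ∀ t, 1 ≤ t → t ≤ T →
      Integrable (fun p : X × ℝ => phi' (p.2 * H t p.1) * p.2 * h t p.1) D := by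
    intro t ht1 ht2
    have hmeas : Measurable (fun p : X × ℝ => phi' (p.2 * H t p.1) * p.2 * h t p.1) :=
      ((measurable_phi'.comp
        (measurable_snd.mul ((hHfact t ht1 (by omega)).1.comp measurable_fst))).mul
        measurable_snd).mul ((hhmeas t).comp measurable_fst)
    apply Integrable.mono' (integrable_const (1 / γ)) hmeas.aestronglyMeasurable
    filter_upwards [hlab] with p hp
    have hy : |p.2| = 1 := by rcases hp with hp | hp <;> simp [hp]
    rw [Real.norm_eq_abs, abs_mul, abs_mul, hy, mul_one]
    calc |phi' (p.2 * H t p.1)| * |h t p.1| ≤ 1 * |h t p.1| :=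
      mul_le_mul_of_nonneg_right (abs_phi'_le _) (abs_nonneg _)
    _ = |h t p.1| := one_mul _
    _ ≤ 1 / γ := hhbd t p.1
  -- notation
  set Φ : ℕ → ℝ := fun t => ∫ p, phi (p.2 * H t p.1) ∂D with hΦ
  set G : ℕ → ℝ := fun t => ∫ p, phi' (p.2 * H t p.1) * p.2 * h t p.1 ∂D with hG
  -- the per-step descent inequality
  have step : ∀ t ∈ Finset.Icc 1 T, Φ (t + 1) ≤ Φ t + η * G t + η ^ 2 / (2 * γ ^ 2) := by
    intro t ht
    obtain ⟨ht1, ht2⟩ := Finset.mem_Icc.1 ht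
    have hptwise : ∀ᵐ p ∂D, phi (p.2 * H (t + 1) p.1) ≤
        phi (p.2 * H t p.1) + η * (phi' (p.2 * H t p.1) * p.2 * h t p.1) +
          η ^ 2 / (2 * γ ^ 2) := by
      filter_upwards [hlab] with p hp
      have hy2 : p.2 * p.2 = 1 := by rcases hp with hp | hp <;> simp [hp]
      have harg : p.2 * H (t + 1) p.1 = p.2 * H t p.1 + η * (p.2 * h t p.1) := by
        rw [hrec t ht p.1]; ring
      have htay := phi_taylor (p.2 * H t p.1) (η * (p.2 * h t p.1))
      rw [harg]
      have hsq : (η * (p.2 * h t p.1)) ^ 2 / 2 ≤ η ^ 2 / (2 * γ ^ 2) := by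
        have h1 : (h t p.1) ^ 2 ≤ (1 / γ) ^ 2 := by
          rw [← sq_abs]; exact pow_le_pow_left₀ (abs_nonneg _) (hhbd t p.1) 2
        have h2 : (η * (p.2 * h t p.1)) ^ 2 = η ^ 2 * ((p.2 * p.2) * (h t p.1) ^ 2) := by ring
        rw [h2, hy2, one_mul]
        rw [div_le_div_iff₀ (by norm_num) (by positivity)]
        have hγ2 : (0:ℝ) < γ ^ 2 := by positivity
        have h3 : (1 / γ) ^ 2 = 1 / γ ^ 2 := by field_simp
        rw [h3] at h1
        have h4 : η ^ 2 * (h t p.1) ^ 2 ≤ η ^ 2 * (1 / γ ^ 2) :=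
          mul_le_mul_of_nonneg_left h1 (by positivity)
        calc η ^ 2 * (h t p.1) ^ 2 * (2 * γ ^ 2) ≤ η ^ 2 * (1 / γ ^ 2) * (2 * γ ^ 2) :=
          mul_le_mul_of_nonneg_right h4 (by positivity)
        _ = η ^ 2 * 2 := by field_simp
      calc phi (p.2 * H t p.1 + η * (p.2 * h t p.1)) ≤
          phi (p.2 * H t p.1) + phi' (p.2 * H t p.1) * (η * (p.2 * h t p.1)) +
            (η * (p.2 * h t p.1)) ^ 2 / 2 := htay
      _ ≤ phi (p.2 * H t p.1) + η * (phi' (p.2 * H t p.1) * p.2 * h t p.1) +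
            η ^ 2 / (2 * γ ^ 2) := by
        have : phi' (p.2 * H t p.1) * (η * (p.2 * h t p.1)) =
            η * (phi' (p.2 * H t p.1) * p.2 * h t p.1) := by ring
        rw [this]; linarith
    have int1 : Integrable (fun p : X × ℝ => phi (p.2 * H t p.1)) D :=
      intPhi t ht1 (by omega)
    have int2 : Integrable
        (fun p : X × ℝ => η * (phi' (p.2 * H t p.1) * p.2 * h t p.1)) D :=
      (intG t ht1 ht2).const_mul η
    have intRHS : Integrable (fun p : X × ℝ =>
        phi (p.2 * H t p.1) + η * (phi' (p.2 * H t p.1) * p.2 * h t p.1) +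
          η ^ 2 / (2 * γ ^ 2)) D := (int1.add int2).add (integrable_const _)
    have hmono := integral_mono_ae (intPhi (t + 1) (by omega) (by omega)) intRHS hptwise
    calc Φ (t + 1) ≤ ∫ p, (phi (p.2 * H t p.1) +
        η * (phi' (p.2 * H t p.1) * p.2 * h t p.1) + η ^ 2 / (2 * γ ^ 2)) ∂D := hmono
    _ = Φ t + η * G t + η ^ 2 / (2 * γ ^ 2) := by
      have int12 : Integrable (fun p : X × ℝ =>
          phi (p.2 * H t p.1) + η * (phi' (p.2 * H t p.1) * p.2 * h t p.1)) D := int1.add int2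
      rw [integral_add int12 (integrable_const _),
        integral_add int1 int2, MeasureTheory.integral_const_mul, integral_const]
      simp [hΦ, hG]
  -- telescoping
  have tele : ∀ (f : ℕ → ℝ) (n : ℕ),
      ∑ t ∈ Finset.Icc 1 n, (f t - f (t + 1)) = f 1 - f (n + 1) := by
    intro f n
    induction n with
    | zero => simp
    | succ n ih => rw [Finset.sum_Icc_succ_top (by omega), ih]; ring
  have sum_ineq : ∑ t ∈ Finset.Icc 1 T, (-η * G t) ≤ 2 + (T : ℝ) * (η ^ 2 / (2 * γ ^ 2)) := by
    have h1 : ∑ t ∈ Finset.Icc 1 T, (-η * G t) ≤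
        ∑ t ∈ Finset.Icc 1 T, (Φ t - Φ (t + 1) + η ^ 2 / (2 * γ ^ 2)) := by
      apply Finset.sum_le_sum
      intro t ht
      have := step t ht
      linarith
    have h2 : ∑ t ∈ Finset.Icc 1 T, (Φ t - Φ (t + 1) + η ^ 2 / (2 * γ ^ 2)) =
        (Φ 1 - Φ (T + 1)) + (T : ℝ) * (η ^ 2 / (2 * γ ^ 2)) := by
      rw [Finset.sum_add_distrib, tele Φ T, Finset.sum_const, Nat.card_Icc]
      simp
    have hΦ1 : Φ 1 = 2 := by
      have : (fun p : X × ℝ => phi (p.2 * H 1 p.1)) = fun _ => (2:ℝ) := by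
        funext p; rw [hH1 p.1, mul_zero, phi_zero]
      simp only [hΦ, this, integral_const]
      simp
    have hΦT : 0 ≤ Φ (T + 1) := integral_nonneg fun p => phi_nonneg _
    calc ∑ t ∈ Finset.Icc 1 T, (-η * G t) ≤
        (Φ 1 - Φ (T + 1)) + (T : ℝ) * (η ^ 2 / (2 * γ ^ 2)) := by rw [← h2]; exact h1
    _ ≤ 2 + (T : ℝ) * (η ^ 2 / (2 * γ ^ 2)) := by rw [hΦ1]; linarith
  -- final arithmetic
  have hT' : (0:ℝ) < T := by exact_mod_cast hT
  have hηT : (0:ℝ) < η * T := by positivity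
  have hsum : -η * ∑ t ∈ Finset.Icc 1 T, G t ≤ 2 + (T : ℝ) * (η ^ 2 / (2 * γ ^ 2)) := by
    rw [Finset.mul_sum]; exact sum_ineq
  have key : (-η * ∑ t ∈ Finset.Icc 1 T, G t) / (η * T) ≤
      (2 + (T : ℝ) * (η ^ 2 / (2 * γ ^ 2))) / (η * T) :=
    div_le_div_of_nonneg_right hsum hηT.le
  calc -(1 / (T : ℝ)) * ∑ t ∈ Finset.Icc 1 T, G t =
      (-η * ∑ t ∈ Finset.Icc 1 T, G t) / (η * T) := by
        field_simp
  _ ≤ (2 + (T : ℝ) * (η ^ 2 / (2 * γ ^ 2))) / (η * T) := key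
  _ = 2 / (η * T) + η / (2 * γ ^ 2) := by field_simp
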